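/- Let f : Γ₊ → ℝ be a symmetric function on the open positive cone Γ₊ = {κ ∈ ℝⁿ : κᵢ > 0 for all i} which is strictly increasing in each variable, positively homogeneous of degree 1, and positive. Then f extends continuously to the closure of Γ₊ (via f(A) = lim_{s→0⁺} f(A + s·(1,...,1))). -/

import Mathlib

open Set Filter

set_option maxHeartbeats 1000000

theorem monotone_homogeneous_extension (n : ℕ) (hn : 0 < n)
    (f : (Fin n → ℝ) → ℝ) (Γ : Set (Fin n → ℝ)) (hΓ : Γ = {κ | ∀ i, 0 < κ i})
    (hsym : ∀ σ : Equiv.Perm (Fin n), ∀ κ ∈ Γ, f (κ ∘ σ) = f κ)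
    (hmono : ∀ κ ∈ Γ, ∀ (i : Fin n) (s t : ℝ), 0 < s → s < t →
      f (Function.update κ i s) < f (Function.update κ i t))
    (hhom : ∀ κ ∈ Γ, ∀ lam : ℝ, 0 < lam → f (lam • κ) = lam * f κ)
    (hpos : ∀ κ ∈ Γ, 0 < f κ) :
    ∃ g : (Fin n → ℝ) → ℝ, ContinuousOn g (closure Γ) ∧
      (∀ κ ∈ Γ, g κ = f κ) ∧
      (∀ A ∈ closure Γ,
        Tendsto (fun s : ℝ => f (A + s • (1 : Fin n → ℝ)))
          (nhdsWithin 0 (Ioi 0)) (nhds (g A))) := by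
  subst hΓ
  haveI : Nonempty (Fin n) := ⟨⟨0, hn⟩⟩
  have happ : ∀ (A : Fin n → ℝ) (s : ℝ) (i : Fin n),
      (A + s • (1 : Fin n → ℝ)) i = A i + s := by
    intro A s i; simp
  -- coordinatewise monotonicity of f
  have key : ∀ T : Finset (Fin n), ∀ κ κ' : Fin n → ℝ, (∀ i, 0 < κ i) → (∀ i, 0 < κ' i) →
      (∀ i, κ i ≤ κ' i) → (∀ i, i ∉ T → κ i = κ' i) → f κ ≤ f κ' := by
    intro T
    induction T using Finset.induction_on with
    | empty =>
      intro κ κ' _ _ _ h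
      have : κ = κ' := funext fun i => h i (Finset.notMem_empty i)
      rw [this]
    | @insert a T ha IH =>
      intro κ κ' hκ hκ' hle hout
      set κ'' := Function.update κ a (κ' a) with hκ''def
      have hκ'' : ∀ i, 0 < κ'' i := by
        intro i; rcases eq_or_ne i a with rfl | hne
        · simpa [κ''] using hκ' i
        · simpa [κ'', Function.update_of_ne hne] using hκ i
      have h1 : f κ ≤ f κ'' := by
        rcases eq_or_lt_of_le (hle a) with heq | hlt
        · have : κ'' = κ := by rw [hκ''def, ← heq, Function.update_eq_self]
          rw [this]
        · have h := hmono κ hκ a (κ a) (κ' a) (hκ a) hlt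
          rw [Function.update_eq_self] at h
          exact le_of_lt h
      have h2 : f κ'' ≤ f κ' := by
        apply IH κ'' κ' hκ'' hκ'
        · intro i; rcases eq_or_ne i a with rfl | hne
          · simp [hκ''def]
          · simp only [hκ''def, Function.update_of_ne hne]; exact hle i
        · intro i hiT; rcases eq_or_ne i a with rfl | hne
          · simp [hκ''def]
          · simp only [hκ''def, Function.update_of_ne hne]
            exact hout i (by simp [Finset.mem_insert, hne, hiT])
      exact h1.trans h2
  have hmono2 : ∀ κ κ' : Fin n → ℝ, (∀ i, 0 < κ i) → (∀ i, 0 < κ' i) →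
      (∀ i, κ i ≤ κ' i) → f κ ≤ f κ' := fun κ κ' h1 h2 h3 =>
    key Finset.univ κ κ' h1 h2 h3 (fun i hi => absurd (Finset.mem_univ i) hi)
  -- the closure of the cone
  have hcl : closure {κ : Fin n → ℝ | ∀ i, 0 < κ i} = {κ | ∀ i, 0 ≤ κ i} := by
    apply Subset.antisymm
    · apply closure_minimal
      · intro κ hκ i; exact le_of_lt (hκ i)
      · have : {κ : Fin n → ℝ | ∀ i, 0 ≤ κ i} = ⋂ i, {κ | 0 ≤ κ i} := by
          ext κ; simp
        rw [this]
        exact isClosed_iInter fun i => isClosed_le continuous_const (continuous_apply i)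
    · intro A hA
      rw [Metric.mem_closure_iff]
      intro ε hε
      refine ⟨A + (ε/2) • (1 : Fin n → ℝ), fun i => ?_, ?_⟩
      · rw [happ]; have := hA i; linarith
      · rw [dist_pi_lt_iff hε]
        intro i
        rw [happ, Real.dist_eq]
        rw [abs_of_nonpos (by linarith)]
        linarith
  have hmemΓ : ∀ (A : Fin n → ℝ), (∀ i, 0 ≤ A i) → ∀ s : ℝ, 0 < s →
      (∀ i, 0 < (A + s • (1 : Fin n → ℝ)) i) := by
    intro A hA s hs i; rw [happ]; have := hA i; linarith
  -- the candidate extension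
  set S : (Fin n → ℝ) → Set ℝ :=
    fun A => (fun s : ℝ => f (A + s • (1 : Fin n → ℝ))) '' Ioi (0:ℝ) with hSdef
  set g : (Fin n → ℝ) → ℝ := fun A => sInf (S A) with hgdef
  have hS_ne : ∀ A, (S A).Nonempty :=
    fun A => ⟨_, mem_image_of_mem _ (Set.mem_Ioi.mpr (one_pos : (0:ℝ) < 1))⟩
  have hS_bdd : ∀ A, (∀ i, 0 ≤ A i) → BddBelow (S A) := by
    intro A hA
    refine ⟨0, fun x hx => ?_⟩
    obtain ⟨s, hs, rfl⟩ := hx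
    exact le_of_lt (hpos _ (hmemΓ A hA s hs))
  have hg_nonneg : ∀ A, (∀ i, 0 ≤ A i) → 0 ≤ g A := by
    intro A hA
    apply le_csInf (hS_ne A)
    rintro b ⟨s, hs, rfl⟩
    exact le_of_lt (hpos _ (hmemΓ A hA s hs))
  have hg_le : ∀ A, (∀ i, 0 ≤ A i) → ∀ s : ℝ, 0 < s → g A ≤ f (A + s • (1 : Fin n → ℝ)) :=
    fun A hA s hs => csInf_le (hS_bdd A hA) (mem_image_of_mem _ hs)
  have hg_mono : ∀ A B : Fin n → ℝ, (∀ i, 0 ≤ A i) → (∀ i, 0 ≤ B i) →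
      (∀ i, A i ≤ B i) → g A ≤ g B := by
    intro A B hA hB hAB
    apply le_csInf (hS_ne B)
    rintro b ⟨s, hs, rfl⟩
    refine le_trans (hg_le A hA s hs) (hmono2 _ _ (hmemΓ A hA s hs) (hmemΓ B hB s hs) ?_)
    intro i; rw [happ, happ]; exact add_le_add_left (hAB i) s
  -- g = f on the open cone
  have hg_eq : ∀ κ : Fin n → ℝ, (∀ i, 0 < κ i) → g κ = f κ := by
    intro κ hκ
    have hκ0 : ∀ i, 0 ≤ κ i := fun i => le_of_lt (hκ i)
    have hfκ : 0 < f κ := hpos κ hκ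
    apply le_antisymm
    · -- g κ ≤ f κ
      apply le_of_forall_pos_le_add
      intro ε hε
      set m : ℝ := Finset.univ.inf' Finset.univ_nonempty κ with hm
      have hm_pos : 0 < m := by
        rw [hm, Finset.lt_inf'_iff]
        exact fun i _ => hκ i
      have hm_le : ∀ i, m ≤ κ i := fun i => Finset.inf'_le κ (Finset.mem_univ i)
      set t : ℝ := ε / f κ with ht
      have ht_pos : 0 < t := div_pos hε hfκ
      have h1 : g κ ≤ f (κ + (t * m) • (1 : Fin n → ℝ)) :=
        hg_le κ hκ0 (t * m) (mul_pos ht_pos hm_pos)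
      have h2 : f (κ + (t * m) • (1 : Fin n → ℝ)) ≤ f ((1 + t) • κ) := by
        apply hmono2
        · exact hmemΓ κ hκ0 (t * m) (mul_pos ht_pos hm_pos)
        · intro i; have := hκ i; simp only [Pi.smul_apply, smul_eq_mul]; nlinarith
        · intro i
          rw [happ]
          simp only [Pi.smul_apply, smul_eq_mul]
          have h3 : t * m ≤ t * κ i := by
            apply mul_le_mul_of_nonneg_left (hm_le i) (le_of_lt ht_pos)
          nlinarith [hκ i]
      have h4 : f ((1 + t) • κ) = (1 + t) * f κ := hhom κ hκ (1 + t) (by linarith)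
      have h5 : (1 + t) * f κ = f κ + ε := by
        rw [ht]; field_simp
      linarith
    · -- f κ ≤ g κ
      apply le_csInf (hS_ne κ)
      rintro b ⟨s, hs, rfl⟩
      apply hmono2 κ _ hκ (hmemΓ κ hκ0 s hs)
      intro i; rw [happ]; have : (0:ℝ) < s := hs; linarith
  -- the limit statement
  have htend : ∀ A : Fin n → ℝ, (∀ i, 0 ≤ A i) →
      Tendsto (fun s : ℝ => f (A + s • (1 : Fin n → ℝ)))
        (nhdsWithin 0 (Ioi 0)) (nhds (g A)) := by
    intro A hA
    rw [Metric.tendsto_nhds]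
    intro ε hε
    obtain ⟨b, ⟨s₀, hs₀, rfl⟩, hb⟩ :=
      exists_lt_of_csInf_lt (hS_ne A) (lt_add_of_pos_right (g A) hε)
    have hs₀' : (0:ℝ) < s₀ := hs₀
    filter_upwards [Ioo_mem_nhdsGT hs₀'] with s hs
    have hle1 : g A ≤ f (A + s • (1 : Fin n → ℝ)) := hg_le A hA s hs.1
    have hle2 : f (A + s • (1 : Fin n → ℝ)) ≤ f (A + s₀ • (1 : Fin n → ℝ)) := by
      apply hmono2 _ _ (hmemΓ A hA s hs.1) (hmemΓ A hA s₀ hs₀')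
      intro i; rw [happ, happ]; have := hs.2; linarith
    rw [Real.dist_eq, abs_lt]
    constructor <;> linarith
  -- continuity on the closure
  have hcont : ContinuousOn g (closure {κ : Fin n → ℝ | ∀ i, 0 < κ i}) := by
    rw [Metric.continuousOn_iff]
    intro A hA ε hε
    rw [hcl] at hA
    have hA' : ∀ i, 0 ≤ A i := hA
    obtain ⟨b, ⟨s₀, hs₀, rfl⟩, hb⟩ :=
      exists_lt_of_csInf_lt (hS_ne A) (lt_add_of_pos_right (g A) (half_pos hε))
    have hs₀' : (0:ℝ) < s₀ := hs₀
    by_cases hP : ∃ i, 0 < A i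
    · -- A has a positive coordinate
      set P : Finset (Fin n) := Finset.univ.filter (fun i => 0 < A i) with hPdef
      have hPne : P.Nonempty := by
        obtain ⟨i, hi⟩ := hP
        exact ⟨i, by simp [hPdef, hi]⟩
      set m : ℝ := P.inf' hPne A with hm
      have hm_pos : 0 < m := by
        rw [hm, Finset.lt_inf'_iff]
        intro i hi
        simp [hPdef] at hi
        exact hi
      have hm_le : ∀ i, 0 < A i → m ≤ A i := by
        intro i hi
        exact Finset.inf'_le A (by simp [hPdef, hi])
      set δ : ℝ := min (s₀ / 2) (min (m / 2) (ε * m / (2 * (g A + 1)))) with hδdef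
      have hgA1 : 0 < g A + 1 := by have := hg_nonneg A hA'; linarith
      have hδ_pos : 0 < δ := by
        apply lt_min (by linarith)
        apply lt_min (by linarith)
        positivity
      have hδ_s₀ : δ ≤ s₀ / 2 := min_le_left _ _
      have hδ_m : δ ≤ m / 2 := le_trans (min_le_right _ _) (min_le_left _ _)
      have hδ_ε : δ ≤ ε * m / (2 * (g A + 1)) :=
        le_trans (min_le_right _ _) (min_le_right _ _)
      refine ⟨δ, hδ_pos, ?_⟩
      intro A' hA'' hdist
      rw [hcl] at hA''
      have hA''0 : ∀ i, 0 ≤ A' i := hA''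
      have hdist' : ∀ i, |A' i - A i| < δ := by
        intro i
        have := dist_le_pi_dist A' A i
        rw [Real.dist_eq] at this
        calc |A' i - A i| ≤ dist A' A := this
          _ < δ := hdist
      -- upper bound : g A' < g A + ε/2
      have hupper : g A' < g A + ε / 2 := by
        have h1 : g A' ≤ f (A' + (s₀ / 2) • (1 : Fin n → ℝ)) :=
          hg_le A' hA''0 (s₀ / 2) (by linarith)
        have h2 : f (A' + (s₀ / 2) • (1 : Fin n → ℝ)) ≤ f (A + s₀ • (1 : Fin n → ℝ)) := by
          apply hmono2 _ _ (hmemΓ A' hA''0 (s₀/2) (by linarith)) (hmemΓ A hA' s₀ hs₀')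
          intro i
          rw [happ, happ]
          have := hdist' i
          rw [abs_lt] at this
          linarith [this.1, this.2]
        linarith
      -- lower bound
      set c : ℝ := δ / m with hc
      have hc_pos : 0 < c := div_pos hδ_pos hm_pos
      have hc_half : c ≤ 1 / 2 := by
        rw [hc, div_le_div_iff₀ hm_pos (by norm_num : (0:ℝ) < 2)]
        linarith
      have hcm : c * m = δ := div_mul_cancel₀ δ (ne_of_gt hm_pos)
      set B : Fin n → ℝ := fun i => if 0 < A i then A i - δ else 0 with hB
      have hB0 : ∀ i, 0 ≤ B i := by
        intro i
        rw [hB]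
        by_cases h : 0 < A i
        · simp only [if_pos h]
          have := hm_le i h
          linarith
        · simp [if_neg h]
      have hBA' : ∀ i, B i ≤ A' i := by
        intro i
        rw [hB]
        by_cases h : 0 < A i
        · simp only [if_pos h]
          have := hdist' i
          rw [abs_lt] at this
          linarith [this.1]
        · simp only [if_neg h]
          exact hA''0 i
      have hgB_le : g B ≤ g A' := hg_mono B A' hB0 hA''0 hBA'
      have hgB_ge : (1 - c) * g A ≤ g B := by
        apply le_csInf (hS_ne B)
        rintro b ⟨s, hs, rfl⟩
        have hs' : (0:ℝ) < s := hs
        have h1c : (0:ℝ) < 1 - c := by linarith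
        have hin : ∀ i, 0 < (A + s • (1 : Fin n → ℝ)) i := hmemΓ A hA' s hs'
        have hstep : f ((1 - c) • (A + s • (1 : Fin n → ℝ))) ≤
            f (B + s • (1 : Fin n → ℝ)) := by
          apply hmono2
          · intro i
            simp only [Pi.smul_apply, smul_eq_mul]
            exact mul_pos h1c (hin i)
          · exact hmemΓ B hB0 s hs'
          · intro i
            simp only [Pi.smul_apply, smul_eq_mul]
            rw [happ, happ]
            rw [hB]
            by_cases h : 0 < A i
            · simp only [if_pos h]
              have h3 := hm_le i h
              nlinarith
            · push_neg at h
              have h4 : A i = 0 := le_antisymm h (hA' i)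
              simp only [if_neg (not_lt.mpr h)]
              rw [h4]
              nlinarith
        have hhomeq : f ((1 - c) • (A + s • (1 : Fin n → ℝ))) =
            (1 - c) * f (A + s • (1 : Fin n → ℝ)) := hhom _ hin (1 - c) h1c
        have h5 : g A ≤ f (A + s • (1 : Fin n → ℝ)) := hg_le A hA' s hs'
        nlinarith [hg_nonneg A hA']
      have hlower : g A - ε / 2 < g A' := by
        have hga := hg_nonneg A hA'
        have hcg : c * g A < ε / 2 := by
          have h6 : δ * (2 * (g A + 1)) ≤ ε * m :=
            (le_div_iff₀ (by positivity : (0:ℝ) < 2 * (g A + 1))).mp hδ_ε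
          have h7 : c * g A = δ * g A / m := by rw [hc]; ring
          rw [h7, div_lt_iff₀ hm_pos]
          linarith [h6, hδ_pos]
        have h8 : (1 - c) * g A = g A - c * g A := by ring
        linarith [hgB_le, hgB_ge]
      rw [Real.dist_eq, abs_lt]
      constructor <;> linarith
    · -- A = 0
      push_neg at hP
      have hA0 : ∀ i, A i = 0 := fun i => le_antisymm (hP i) (hA' i)
      have hgA0 : g A = 0 := by
        apply le_antisymm
        · apply le_of_forall_pos_le_add
          intro η hη
          have hη' : 0 < η / f 1 := div_pos hη (hpos 1 (fun i => one_pos))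
          have h1 : g A ≤ f (A + (η / f 1) • (1 : Fin n → ℝ)) := hg_le A hA' _ hη'
          have h2 : A + (η / f 1) • (1 : Fin n → ℝ) = (η / f 1) • (1 : Fin n → ℝ) := by
            funext i; rw [happ]; simp [hA0 i]
          have h3 : f ((η / f 1) • (1 : Fin n → ℝ)) = (η / f 1) * f 1 :=
            hhom 1 (fun i => one_pos) _ hη'
          have h4 : (η / f 1) * f 1 = η := div_mul_cancel₀ η (ne_of_gt (hpos 1 fun i => one_pos))
          rw [h2, h3, h4] at h1
          linarith
        · exact hg_nonneg A hA'
      refine ⟨s₀ / 2, by linarith, ?_⟩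
      intro A' hA'' hdist
      rw [hcl] at hA''
      have hA''0 : ∀ i, 0 ≤ A' i := hA''
      have hdist' : ∀ i, |A' i - A i| < s₀ / 2 := by
        intro i
        have := dist_le_pi_dist A' A i
        rw [Real.dist_eq] at this
        linarith
      have hupper : g A' < g A + ε / 2 := by
        have h1 : g A' ≤ f (A' + (s₀ / 2) • (1 : Fin n → ℝ)) :=
          hg_le A' hA''0 (s₀ / 2) (by linarith)
        have h2 : f (A' + (s₀ / 2) • (1 : Fin n → ℝ)) ≤ f (A + s₀ • (1 : Fin n → ℝ)) := by
          apply hmono2 _ _ (hmemΓ A' hA''0 (s₀/2) (by linarith)) (hmemΓ A hA' s₀ hs₀')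
          intro i
          rw [happ, happ]
          have := hdist' i
          rw [abs_lt] at this
          linarith [this.1, this.2]
        linarith
      rw [Real.dist_eq, abs_lt]
      have := hg_nonneg A' hA''0
      constructor <;> linarith [hgA0]
  refine ⟨g, hcont, fun κ hκ => hg_eq κ hκ, fun A hA => htend A (by rwa [hcl] at hA)⟩
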